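/- Let M be a finitely generated meet irreducible R-module satisfying the finite coprime condition, not simple, equipped with the topology generated by the basis B_M of coprime cosets. Then a point m ∈ M is an indiscrete point (its only open neighborhood is M) if and only if m ∈ J(M). -/

import Mathlib

open Pointwise

/-- In the Golomb topology `G̃(M)` of a finitely generated meet irreducible module
satisfying the finite coprime condition and not simple, a point is indiscrete
iff it lies in the Jacobson radical `J(M)`. -/
theorem indiscrete_points_eq_jacobson
    {R M : Type*} [CommRing R] [AddCommGroup M] [Module R M] [Nontrivial M]
    [Module.Finite R M] (hns : ¬ IsSimpleModule R M)
    (hmi : ∀ K L : Submodule R M, K ≠ ⊥ → L ≠ ⊥ → K ⊓ L ≠ ⊥)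
    (hfcc : ∀ N K₁ K₂ : Submodule R M, N ⊔ K₁ = ⊤ → N ⊔ K₂ = ⊤ → N ⊔ (K₁ ⊓ K₂) = ⊤)
    (m : M) :
    letI B : Set (Set M) := {S | ∃ (x : M) (N : Submodule R M),
      N ≠ ⊥ ∧ N ⊔ Submodule.span R {x} = ⊤ ∧ S = x +ᵥ (N : Set M)}
    letI t : TopologicalSpace M := TopologicalSpace.generateFrom B
    ((∀ U : Set M, t.IsOpen U → m ∈ U → U = Set.univ) ↔
      m ∈ sInf {P : Submodule R M | IsCoatom P}) := by
  haveI : IsCoatomic (Submodule R M) :=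
    CompleteLattice.coatomic_of_top_compact
      ((Submodule.fg_iff_compact _).mp (Module.finite_def.mp ‹Module.Finite R M›))
  constructor
  · -- indiscrete → m ∈ J(M)
    intro h
    rw [Submodule.mem_sInf]
    by_contra hc
    push_neg at hc
    obtain ⟨P, hP, hmP⟩ := hc
    have hPbot : P ≠ ⊥ := by
      rintro rfl
      exact hns ((isSimpleModule_iff R M).mpr (isSimpleOrder_iff_isCoatom_bot.mpr hP))
    have htop : P ⊔ Submodule.span R {m} = ⊤ := by
      refine hP.2 _ (lt_of_le_of_ne le_sup_left fun he => hmP ?_)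
      have : Submodule.span R {m} ≤ P := he ▸ le_sup_right
      exact this (Submodule.mem_span_singleton_self m)
    have hopen : TopologicalSpace.GenerateOpen {S | ∃ (x : M) (N : Submodule R M),
      N ≠ ⊥ ∧ N ⊔ Submodule.span R {x} = ⊤ ∧ S = x +ᵥ (N : Set M)} (m +ᵥ (P : Set M)) :=
      TopologicalSpace.GenerateOpen.basic _ ⟨m, P, hPbot, htop, rfl⟩
    have hmem : m ∈ m +ᵥ (P : Set M) := ⟨0, P.zero_mem, add_zero m⟩
    have := h _ hopen hmem
    have h0 : (0 : M) ∈ m +ᵥ (P : Set M) := this ▸ Set.mem_univ 0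
    obtain ⟨p, hp, hpe⟩ := h0
    apply hmP
    have hme : m = -p := eq_neg_of_add_eq_zero_left hpe
    rw [hme]
    exact P.neg_mem hp
  · -- m ∈ J(M) → indiscrete
    intro hJ U hU hm
    have hU' : TopologicalSpace.GenerateOpen {S | ∃ (x : M) (N : Submodule R M),
      N ≠ ⊥ ∧ N ⊔ Submodule.span R {x} = ⊤ ∧ S = x +ᵥ (N : Set M)} U := hU
    clear hU
    induction hU' with
    | basic s hs =>
      obtain ⟨x, N, hNbot, hNx, rfl⟩ := hs
      obtain ⟨n, hn, hne⟩ := hm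
      have hNm : N ⊔ Submodule.span R {m} = ⊤ := by
        rw [eq_top_iff, ← hNx]
        refine sup_le le_sup_left ?_
        rw [Submodule.span_singleton_le_iff_mem]
        have : x = m - n := by rw [← hne]; show x = x + n - n; abel
        rw [this]
        exact Submodule.sub_mem _
          (le_sup_right (α := Submodule R M) (Submodule.mem_span_singleton_self m))
          (le_sup_left (α := Submodule R M) hn)
      have hNtop : N = ⊤ := by
        rcases eq_top_or_exists_le_coatom N with h | ⟨P, hP, hle⟩
        · exact h
        · exfalso
          have hmP : m ∈ P := Submodule.mem_sInf.mp hJ P hP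
          have : P ⊔ Submodule.span R {m} = ⊤ := by
            rw [eq_top_iff, ← hNm]
            exact sup_le (le_trans hle le_sup_left) le_sup_right
          have : P = ⊤ := by
            rw [← this]
            refine (sup_eq_left.mpr ?_).symm
            rwa [Submodule.span_singleton_le_iff_mem]
          exact hP.1 this
      subst hNtop
      ext y
      simp only [Set.mem_univ, iff_true]
      exact ⟨y - x, trivial, by simp⟩
    | univ => rfl
    | inter U V hU hV ihU ihV =>
      rw [ihU hm.1, ihV hm.2, Set.univ_inter]
    | sUnion S hS ih =>
      obtain ⟨s, hsS, hms⟩ := hm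
      exact Set.eq_univ_of_univ_subset ((ih s hsS hms).symm ▸ Set.subset_sUnion_of_mem hsS)
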